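/- Let d ≥ 1 and K ≥ 1. Let Λ₀ be a real symmetric positive definite d×d matrix with Λ₀ − I positive semidefinite, and let φ_1, …, φ_K ∈ ℝ^d satisfy ‖φ_k‖₂ ≤ 1 for all k. Define Λ_k = Λ₀ + Σ_{i=1}^{k-1} φ_i φ_iᵀ for k = 1, …, K+1. Then Σ_{k=1}^{K} φ_kᵀ (Λ_k)^{-1} φ_k ≤ 2 log( det(Λ_{K+1}) / det(Λ₁) ). -/

import Mathlib

open scoped BigOperators Matrix
open Matrix

section EPaux

variable {d : ℕ}

private lemma ep_outer_mulVec (x y : Fin d → ℝ) :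
    vecMulVec x x *ᵥ y = (x ⬝ᵥ y) • x := by
  ext i
  simp [vecMulVec_apply, mulVec, dotProduct, Finset.mul_sum, mul_comm, mul_assoc, mul_left_comm]

private lemma ep_outer_psd (x : Fin d → ℝ) : (vecMulVec x x).PosSemidef := by
  refine PosSemidef.of_dotProduct_mulVec_nonneg ?_ fun y => ?_
  · ext i j
    simp [conjTranspose_apply, vecMulVec_apply, mul_comm]
  · rw [ep_outer_mulVec, dotProduct_smul, star_trivial, smul_eq_mul, dotProduct_comm]
    exact mul_self_nonneg _

private lemma ep_sum_psd (φ : ℕ → Fin d → ℝ) (s : Finset ℕ) :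
    (∑ i ∈ s, vecMulVec (φ i) (φ i)).PosSemidef := by
  classical
  induction s using Finset.induction with
  | empty => simpa using (Matrix.PosSemidef.zero : (0 : Matrix (Fin d) (Fin d) ℝ).PosSemidef)
  | insert _ _ h ih => rw [Finset.sum_insert h]; exact (ep_outer_psd _).add ih

private lemma ep_det_step {A : Matrix (Fin d) (Fin d) ℝ} (hA : A.PosDef) (u : Fin d → ℝ) :
    (A + vecMulVec u u).det = A.det * (1 + u ⬝ᵥ A⁻¹ *ᵥ u) := by
  have hdet : IsUnit A.det := isUnit_iff_ne_zero.2 hA.det_pos.ne'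
  rw [vecMulVec_eq Unit, Matrix.det_add_replicateCol_mul_replicateRow hdet]
  congr 1
  rw [det_unique]
  simp only [Matrix.mul_apply, dotProduct, mulVec, Finset.sum_mul, Finset.mul_sum,
    Pi.add_apply, Matrix.one_apply_eq, Matrix.replicateRow_apply, Matrix.replicateCol_apply, Matrix.add_apply]
  congr 1
  rw [Finset.sum_comm]
  exact Finset.sum_congr rfl fun a _ => Finset.sum_congr rfl fun b _ => by ring

private lemma ep_half_le_log {x : ℝ} (h0 : 0 ≤ x) (h1 : x ≤ 1) :
    x ≤ 2 * Real.log (1 + x) := by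
  have hpos : 0 < 1 - x / 2 := by linarith
  have h := Real.add_one_le_exp (-(x / 2))
  have hx2 : Real.exp (x / 2) ≤ 1 + x := by
    have h2 : Real.exp (x / 2) ≤ (1 - x / 2)⁻¹ := by
      have he : Real.exp (x / 2) = (Real.exp (-(x / 2)))⁻¹ := by
        rw [Real.exp_neg, inv_inv]
      rw [he]
      exact inv_anti₀ hpos (by linarith)
    have h3 : (1 - x / 2)⁻¹ ≤ 1 + x := by
      have h' : (1 - x / 2)⁻¹ * (1 - x / 2) = 1 := inv_mul_cancel₀ hpos.ne'
      nlinarith [inv_pos.2 hpos]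
    linarith
  have := (Real.le_log_iff_exp_le (by linarith : (0:ℝ) < 1 + x)).2 hx2
  linarith

private lemma ep_quad_le_one {A : Matrix (Fin d) (Fin d) ℝ} (hA : A.PosDef)
    (hreg : (A - 1).PosSemidef) {u : Fin d → ℝ} (hu : u ⬝ᵥ u ≤ 1) :
    u ⬝ᵥ A⁻¹ *ᵥ u ≤ 1 := by
  set y := A⁻¹ *ᵥ u with hy
  have hAy : A *ᵥ y = u := by
    rw [hy, Matrix.mulVec_mulVec, Matrix.mul_nonsing_inv _ (isUnit_iff_ne_zero.2 hA.det_pos.ne'),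
      Matrix.one_mulVec]
  have hs0 : 0 ≤ u ⬝ᵥ y := by
    have := hA.inv.posSemidef.dotProduct_mulVec_nonneg u
    simpa using this
  have hyy : y ⬝ᵥ y ≤ y ⬝ᵥ u := by
    have h := hreg.dotProduct_mulVec_nonneg y
    simp only [star_trivial, Matrix.sub_mulVec, dotProduct_sub, Matrix.one_mulVec, hAy] at h
    linarith
  have hcs : (u ⬝ᵥ y) ^ 2 ≤ (u ⬝ᵥ u) * (y ⬝ᵥ y) := by
    have := Finset.sum_mul_sq_le_sq_mul_sq Finset.univ u y
    simpa [dotProduct, sq] using this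
  have hyu : y ⬝ᵥ u = u ⬝ᵥ y := dotProduct_comm _ _
  have hyy0 : 0 ≤ y ⬝ᵥ y := Finset.sum_nonneg fun i _ => mul_self_nonneg _
  nlinarith

end EPaux

/-- Elliptical potential (log-determinant) lemma: if `Λ₀ ⪰ I` and `‖φ_k‖₂ ≤ 1`, then
with `Λ_k = Λ₀ + Σ_{i<k} φ_i φ_iᵀ`,
`Σ_{k=1}^K φ_kᵀ Λ_k^{-1} φ_k ≤ 2 log(det Λ_{K+1} / det Λ₁)`. -/
theorem elliptical_potential (d K : ℕ) (hd : 1 ≤ d) (hK : 1 ≤ K)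
    (Λ₀ : Matrix (Fin d) (Fin d) ℝ) (hΛ₀ : Λ₀.PosDef)
    (hreg : (Λ₀ - 1).PosSemidef)
    (φ : ℕ → Fin d → ℝ)
    (hφ : ∀ k ∈ Finset.Icc 1 K, Real.sqrt (∑ i, φ k i ^ 2) ≤ 1) :
    ∑ k ∈ Finset.Icc 1 K,
        φ k ⬝ᵥ (Λ₀ + ∑ i ∈ Finset.Icc 1 (k - 1), Matrix.vecMulVec (φ i) (φ i))⁻¹ *ᵥ φ k ≤
      2 * Real.log
        ((Λ₀ + ∑ i ∈ Finset.Icc 1 K, Matrix.vecMulVec (φ i) (φ i)).det / Λ₀.det) := by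
  classical
  -- the matrices Λ_k
  set N : ℕ → Matrix (Fin d) (Fin d) ℝ :=
    fun n => Λ₀ + ∑ i ∈ Finset.Icc 1 n, Matrix.vecMulVec (φ i) (φ i) with hN
  have hN0 : N 0 = Λ₀ := by
    simp [hN]
  have hNpd : ∀ n, (N n).PosDef := fun n => hΛ₀.add_posSemidef (ep_sum_psd φ _)
  have hNreg : ∀ n, ((N n) - 1).PosSemidef := by
    intro n
    have h1 : N n - 1 = (Λ₀ - 1) + ∑ i ∈ Finset.Icc 1 n, Matrix.vecMulVec (φ i) (φ i) := by
      rw [hN]; exact add_sub_right_comm _ _ _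
    rw [h1]
    exact hreg.add (ep_sum_psd φ _)
  have hdetpos : ∀ n, 0 < (N n).det := fun n => (hNpd n).det_pos
  -- per-step quadratic forms
  set x : ℕ → ℝ := fun i => φ (i + 1) ⬝ᵥ (N i)⁻¹ *ᵥ φ (i + 1) with hx
  have hx0 : ∀ i, 0 ≤ x i := by
    intro i
    have := (hNpd i).inv.posSemidef.dotProduct_mulVec_nonneg (φ (i + 1))
    simpa [hx] using this
  have hx1 : ∀ i < K, x i ≤ 1 := by
    intro i hi
    refine ep_quad_le_one (hNpd i) (hNreg i) ?_
    have h := hφ (i + 1) (Finset.mem_Icc.2 ⟨Nat.le_add_left 1 i, hi⟩)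
    have hnn : (0:ℝ) ≤ ∑ j, φ (i + 1) j ^ 2 := Finset.sum_nonneg fun j _ => sq_nonneg _
    have : ∑ j, φ (i + 1) j ^ 2 ≤ 1 := by
      nlinarith [Real.sq_sqrt hnn, Real.sqrt_nonneg (∑ j, φ (i + 1) j ^ 2)]
    simpa [dotProduct, sq] using this
  -- determinant recursion
  have hdetstep : ∀ i, (N (i + 1)).det = (N i).det * (1 + x i) := by
    intro i
    have hsucc : N (i + 1) = N i + Matrix.vecMulVec (φ (i + 1)) (φ (i + 1)) := by
      simp only [hN]
      rw [Finset.sum_Icc_succ_top (Nat.le_add_left 1 i), add_assoc]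
    rw [hsucc, ep_det_step (hNpd i)]
  have hlogstep : ∀ i < K, x i ≤ 2 * (Real.log (N (i + 1)).det - Real.log (N i).det) := by
    intro i hi
    have h1x : (0:ℝ) < 1 + x i := by linarith [hx0 i]
    have : Real.log (N (i + 1)).det = Real.log (N i).det + Real.log (1 + x i) := by
      rw [hdetstep i, Real.log_mul (hdetpos i).ne' h1x.ne']
    rw [this]
    have := ep_half_le_log (hx0 i) (hx1 i hi)
    linarith
  -- rewrite the sum over Icc as a sum over range
  have hsum : ∑ k ∈ Finset.Icc 1 K,
        φ k ⬝ᵥ (Λ₀ + ∑ i ∈ Finset.Icc 1 (k - 1), Matrix.vecMulVec (φ i) (φ i))⁻¹ *ᵥ φ k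
      = ∑ i ∈ Finset.range K, x i := by
    rw [← Finset.Ico_add_one_right_eq_Icc, Finset.sum_Ico_eq_sum_range]
    refine Finset.sum_congr rfl fun i _ => ?_
    have h1 : 1 + i - 1 = i := by omega
    simp only [hx, hN, h1]
    rw [add_comm 1 i]
  rw [hsum]
  -- telescoping bound
  have htel : ∑ i ∈ Finset.range K, x i
      ≤ 2 * (Real.log (N K).det - Real.log (N 0).det) := by
    calc ∑ i ∈ Finset.range K, x i
        ≤ ∑ i ∈ Finset.range K,
            2 * (Real.log (N (i + 1)).det - Real.log (N i).det) := by
          refine Finset.sum_le_sum fun i hi => hlogstep i (Finset.mem_range.1 hi)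
      _ = 2 * ∑ i ∈ Finset.range K,
            (Real.log (N (i + 1)).det - Real.log (N i).det) := by
          rw [Finset.mul_sum]
      _ = 2 * (Real.log (N K).det - Real.log (N 0).det) := by
          rw [Finset.sum_range_sub (fun n => Real.log (N n).det)]
  refine htel.trans (le_of_eq ?_)
  rw [hN0, Real.log_div (hdetpos K).ne' hΛ₀.det_pos.ne']
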